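/- The complexified Levi-Civita connection ∇̃ satisfies: ∇̃_{L_m} L_n = -2i λ_{m,n} L_{m+n} for all m, n ≥ 1; ∇̃_{L_{-m}} L_n = i(m+n) L_{n-m} if n > m and 0 if n ≤ m; ∇̃_{L_m} L_{-n} = -i(m+n) L_{m-n} if n > m and 0 if n ≤ m; and ∇̃_{L_{-m}} L_{-n} = 2i λ_{m,n} L_{-m-n}. -/

import Mathlib

/-- index type for the basis `{f_{k+1}} ∪ {g_{k+1}}` of `diff_0(S¹)`:
`Sum.inl k` stands for `f_{k+1} = cos((k+1)t)`, `Sum.inr k` for `g_{k+1} = sin((k+1)t)`. -/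
abbrev Idx := ℕ ⊕ ℕ

/-- the complexification of `diff_0(S¹)`, modelled as the free complex vector space on the
basis `{f_k, g_k : k ≥ 1}`. -/
abbrev Vc := Idx →₀ ℂ

/-- `f_k = cos(kt)` (with `f_0` projected to `0`) -/
noncomputable def Fc : ℕ → Vc := fun k =>
  if k = 0 then 0 else Finsupp.single (Sum.inl (k - 1)) 1

/-- `g_k = sin(kt)` (with `g_0 = 0`) -/
noncomputable def Gc : ℕ → Vc := fun k =>
  if k = 0 then 0 else Finsupp.single (Sum.inr (k - 1)) 1

/-- `θ_k = 2hk + (c/12)(k³ - k)` -/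
noncomputable def th (c h : ℝ) (k : ℤ) : ℝ := 2 * h * k + c / 12 * ((k : ℝ) ^ 3 - k)

/-- `λ_{m,n} = (2n+m)θ_m / (2θ_{m+n})` -/
noncomputable def lam (c h : ℝ) (m n : ℤ) : ℝ :=
  (2 * (n : ℝ) + m) * th c h m / (2 * th c h (m + n))

/-- `|M - N|` for natural numbers -/
def dN (M N : ℕ) : ℕ := max M N - min M N

/-- `sign (M - N)` -/
noncomputable def sgc (M N : ℕ) : ℂ := if N < M then 1 else -1

/-- the projected bracket `[·,·]_m` on basis elements, extended complex-bilinearly -/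
noncomputable def brBc : Idx → Idx → Vc
  | Sum.inl m, Sum.inl n =>
      (((m : ℂ) - n) / 2) • Gc (m + n + 2)
        + (((m : ℂ) + n + 2) / 2 * sgc (m + 1) (n + 1)) • Gc (dN (m + 1) (n + 1))
  | Sum.inl m, Sum.inr n =>
      (((n : ℂ) - m) / 2) • Fc (m + n + 2)
        + (((m : ℂ) + n + 2) / 2) • Fc (dN (m + 1) (n + 1))
  | Sum.inr m, Sum.inl n =>
      -((((m : ℂ) - n) / 2) • Fc (m + n + 2)
        + (((m : ℂ) + n + 2) / 2) • Fc (dN (m + 1) (n + 1)))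
  | Sum.inr m, Sum.inr n =>
      (((n : ℂ) - m) / 2) • Gc (m + n + 2)
        + (((m : ℂ) + n + 2) / 2 * sgc (m + 1) (n + 1)) • Gc (dN (m + 1) (n + 1))

/-- complex-bilinear extension of a map given on basis elements -/
noncomputable def bilc (φ : Idx → Idx → Vc) (x y : Vc) : Vc :=
  x.sum fun i a => y.sum fun j b => (a * b) • φ i j

/-- the projected (mean-zero) bracket on the complexification of `diff_0(S¹)` -/
noncomputable def brmc : Vc → Vc → Vc := bilc brBc

/-- `L_m = f_m + i g_m` and `L_{-m} = f_m - i g_m` for `m ≥ 1` (and `L_0 = f_0`,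
which is projected to `0` in `diff_0(S¹)`). -/
noncomputable def L : ℤ → Vc := fun n =>
  if n = 0 then 0
  else Fc n.natAbs + ((if 0 < n then Complex.I else -Complex.I) • Gc n.natAbs)


lemma L_pos (k : ℕ) (hk : 1 ≤ k) : L (k : ℤ) = Fc k + Complex.I • Gc k := by
  have h0 : (k : ℤ) ≠ 0 := by omega
  simp [L, h0, show (0:ℤ) < k by omega, show k ≠ 0 by omega, show 0 < k by omega]

lemma L_neg (k : ℕ) (hk : 1 ≤ k) : L (-(k : ℤ)) = Fc k + (-Complex.I) • Gc k := by
  have h0 : -(k : ℤ) ≠ 0 := by omega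
  simp [L, h0, show ¬ (0:ℤ) < -(k:ℤ) by omega]

/-- The complexified Levi-Civita connection `∇̃` (given by its values on the real basis,
extended complex-bilinearly) takes the stated values on the `L_m`. -/
theorem nablaTilde_L_values (c h : ℝ) (hc : 0 < c) (hh : 0 < h)
    (D : Vc → Vc → Vc)
    (hadd1 : ∀ x y z : Vc, D (x + y) z = D x z + D y z)
    (hadd2 : ∀ x y z : Vc, D x (y + z) = D x y + D x z)
    (hsmul1 : ∀ (r : ℂ) (x y : Vc), D (r • x) y = r • D x y)
    (hsmul2 : ∀ (r : ℂ) (x y : Vc), D x (r • y) = r • D x y)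
    (hff1 : ∀ m n : ℕ, 1 ≤ m → m < n →
      D (Fc m) (Fc n) = (lam c h m n : ℂ) • Gc (n + m) - (((m : ℂ) + n) / 2) • Gc (n - m))
    (hff2 : ∀ m n : ℕ, 1 ≤ n → n < m → D (Fc m) (Fc n) = (lam c h m n : ℂ) • Gc (n + m))
    (hff3 : ∀ n : ℕ, 1 ≤ n → D (Fc n) (Fc n) = (lam c h n n : ℂ) • Gc (2 * n))
    (hfg1 : ∀ m n : ℕ, 1 ≤ m → m < n →
      D (Fc m) (Gc n) = (((m : ℂ) + n) / 2) • Fc (n - m) - (lam c h m n : ℂ) • Fc (n + m))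
    (hfg2 : ∀ m n : ℕ, 1 ≤ n → n < m → D (Fc m) (Gc n) = (-(lam c h m n : ℂ)) • Fc (n + m))
    (hfg3 : ∀ n : ℕ, 1 ≤ n → D (Fc n) (Gc n) = (-(lam c h n n : ℂ)) • Fc (2 * n))
    (hgf1 : ∀ m n : ℕ, 1 ≤ m → m < n → D (Gc n) (Fc m) = (-(lam c h n m : ℂ)) • Fc (n + m))
    (hgf2 : ∀ m n : ℕ, 1 ≤ n → n < m →
      D (Gc n) (Fc m) = (-(lam c h n m : ℂ)) • Fc (n + m) - (((m : ℂ) + n) / 2) • Fc (m - n))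
    (hgf3 : ∀ n : ℕ, 1 ≤ n → D (Gc n) (Fc n) = (-(lam c h n n : ℂ)) • Fc (2 * n))
    (hgg1 : ∀ m n : ℕ, 1 ≤ m → m < n →
      D (Gc m) (Gc n) = (-(lam c h m n : ℂ)) • Gc (n + m) - (((m : ℂ) + n) / 2) • Gc (n - m))
    (hgg2 : ∀ m n : ℕ, 1 ≤ n → n < m → D (Gc m) (Gc n) = (-(lam c h m n : ℂ)) • Gc (n + m))
    (hgg3 : ∀ n : ℕ, 1 ≤ n → D (Gc n) (Gc n) = (-(lam c h n n : ℂ)) • Gc (2 * n))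
    (m n : ℕ) (hm : 1 ≤ m) (hn : 1 ≤ n) :
    D (L m) (L n) = (-2 * Complex.I * (lam c h m n : ℂ)) • L ((m : ℤ) + n) ∧
    (m < n → D (L (-(m : ℤ))) (L n) = (Complex.I * ((m : ℂ) + n)) • L ((n : ℤ) - m)) ∧
    (n ≤ m → D (L (-(m : ℤ))) (L n) = 0) ∧
    (m < n → D (L m) (L (-(n : ℤ))) = (-(Complex.I * ((m : ℂ) + n))) • L ((m : ℤ) - n)) ∧
    (n ≤ m → D (L m) (L (-(n : ℤ))) = 0) ∧
    D (L (-(m : ℤ))) (L (-(n : ℤ))) = (2 * Complex.I * (lam c h m n : ℂ)) • L (-(m : ℤ) - n) := by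
  have expand : ∀ (a b : ℂ) (x y u v : Vc),
      D (x + a • y) (u + b • v)
        = D x u + b • D x v + a • D y u + (a * b) • D y v := by
    intro a b x y u v
    simp only [hadd1, hadd2, hsmul1, hsmul2]
    module
  refine ⟨?_, ?_, ?_, ?_, ?_, ?_⟩
  · -- D (L m) (L n)
    rcases lt_trichotomy m n with hlt | heq | hlt
    · rw [L_pos m hm, L_pos n hn, expand,
        hff1 m n hm hlt, hfg1 m n hm hlt, hgf2 n m hm hlt, hgg1 m n hm hlt,
        show ((m:ℤ) + n) = ((m + n : ℕ) : ℤ) by push_cast; ring,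
        L_pos (m+n) (by omega), show n + m = m + n from Nat.add_comm n m]
      match_scalars <;> ring_nf <;> simp [Complex.I_sq] <;> ring
    · subst heq
      rw [L_pos m hm, expand, hff3 m hm, hfg3 m hm, hgf3 m hm, hgg3 m hm,
        show ((m:ℤ) + m) = ((2 * m : ℕ) : ℤ) by push_cast; ring,
        L_pos (2*m) (by omega)]
      match_scalars <;> ring_nf <;> simp [Complex.I_sq] <;> ring
    · rw [L_pos m hm, L_pos n hn, expand,
        hff2 m n hn hlt, hfg2 m n hn hlt, hgf1 n m hn hlt, hgg2 m n hn hlt,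
        show ((m:ℤ) + n) = ((m + n : ℕ) : ℤ) by push_cast; ring,
        L_pos (m+n) (by omega), show n + m = m + n from Nat.add_comm n m]
      match_scalars <;> ring_nf <;> simp [Complex.I_sq] <;> ring
  · -- D (L (-m)) (L n), m < n
    intro hlt
    rw [L_neg m hm, L_pos n hn, expand,
      hff1 m n hm hlt, hfg1 m n hm hlt, hgf2 n m hm hlt, hgg1 m n hm hlt,
      show ((n:ℤ) - m) = ((n - m : ℕ) : ℤ) by omega,
      L_pos (n-m) (by omega), show n + m = m + n from Nat.add_comm n m]
    match_scalars <;> ring_nf <;> simp [Complex.I_sq] <;> push_cast [show m ≤ n from hlt.le] <;> ring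
  · -- D (L (-m)) (L n), n ≤ m : zero
    intro hle
    rcases eq_or_lt_of_le hle with heq | hlt
    · subst heq
      rw [L_neg n hn, L_pos n hn, expand, hff3 n hn, hfg3 n hn, hgf3 n hn, hgg3 n hn]
      match_scalars <;> ring_nf <;> simp [Complex.I_sq] <;> ring
    · rw [L_neg m hm, L_pos n hn, expand,
        hff2 m n hn hlt, hfg2 m n hn hlt, hgf1 n m hn hlt, hgg2 m n hn hlt,
        show n + m = m + n from Nat.add_comm n m]
      match_scalars <;> ring_nf <;> simp [Complex.I_sq] <;> ring
  · -- D (L m) (L (-n)), m < n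
    intro hlt
    rw [L_pos m hm, L_neg n hn, expand,
      hff1 m n hm hlt, hfg1 m n hm hlt, hgf2 n m hm hlt, hgg1 m n hm hlt,
      show ((m:ℤ) - n) = -((n - m : ℕ) : ℤ) by omega,
      L_neg (n-m) (by omega), show n + m = m + n from Nat.add_comm n m]
    match_scalars <;> ring_nf <;> simp [Complex.I_sq] <;> push_cast [show m ≤ n from hlt.le] <;> ring
  · -- D (L m) (L (-n)), n ≤ m : zero
    intro hle
    rcases eq_or_lt_of_le hle with heq | hlt
    · subst heq
      rw [L_pos n hn, L_neg n hn, expand, hff3 n hn, hfg3 n hn, hgf3 n hn, hgg3 n hn]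
      match_scalars <;> ring_nf <;> simp [Complex.I_sq] <;> ring
    · rw [L_pos m hm, L_neg n hn, expand,
        hff2 m n hn hlt, hfg2 m n hn hlt, hgf1 n m hn hlt, hgg2 m n hn hlt,
        show n + m = m + n from Nat.add_comm n m]
      match_scalars <;> ring_nf <;> simp [Complex.I_sq] <;> ring
  · -- D (L (-m)) (L (-n))
    rcases lt_trichotomy m n with hlt | heq | hlt
    · rw [L_neg m hm, L_neg n hn, expand,
        hff1 m n hm hlt, hfg1 m n hm hlt, hgf2 n m hm hlt, hgg1 m n hm hlt,
        show (-(m:ℤ) - n) = -((m + n : ℕ) : ℤ) by push_cast; ring,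
        L_neg (m+n) (by omega), show n + m = m + n from Nat.add_comm n m]
      match_scalars <;> ring_nf <;> simp [Complex.I_sq] <;> ring
    · subst heq
      rw [L_neg m hm, expand, hff3 m hm, hfg3 m hm, hgf3 m hm, hgg3 m hm,
        show (-(m:ℤ) - m) = -((2 * m : ℕ) : ℤ) by push_cast; ring,
        L_neg (2*m) (by omega)]
      match_scalars <;> ring_nf <;> simp [Complex.I_sq] <;> ring
    · rw [L_neg m hm, L_neg n hn, expand,
        hff2 m n hn hlt, hfg2 m n hn hlt, hgf1 n m hn hlt, hgg2 m n hn hlt,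
        show (-(m:ℤ) - n) = -((m + n : ℕ) : ℤ) by push_cast; ring,
        L_neg (m+n) (by omega), show n + m = m + n from Nat.add_comm n m]
      match_scalars <;> ring_nf <;> simp [Complex.I_sq] <;> ring
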